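/- Main theorem (set form): Let O ∈ ℝ², W ⊆ ℝ² nonempty closed (walls). Define the visible set V = {w ∈ W : dist(O,w) ≤ R and no x ∈ W lies strictly between O and w}. Assume: (a) R > L + ℓ + M/2; (b) every x ∈ W satisfies dist(O,x) ≥ D with D² ≥ (L+ℓ)² − m²/4; (c) p is a point with dist(O,p) ≤ L + ℓ, infDist(p, W) ≤ M/2, and infDist(p, W) ≥ m/2. Then infDist(p, V) = infDist(p, W), and every nearest point of W to p belongs to V. -/

import Mathlib

set_option maxHeartbeats 1000000

theorem stmt8 (O p : EuclideanSpace ℝ (Fin 2)) (W : Set (EuclideanSpace ℝ (Fin 2)))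
    (hWne : W.Nonempty) (hWclosed : IsClosed W)
    (m M L ℓ R D : ℝ)
    (hm : 0 < m) (hmM : m ≤ M) (hL : 0 < L) (hl : 0 < ℓ) (hRpos : 0 < R) (hDpos : 0 < D)
    (hR : R > L + ℓ + M / 2)
    (hDist : ∀ x ∈ W, D ≤ dist O x)
    (hD : D ^ 2 ≥ (L + ℓ) ^ 2 - m ^ 2 / 4)
    (hp : dist O p ≤ L + ℓ)
    (hpM : Metric.infDist p W ≤ M / 2)
    (hpm : m / 2 ≤ Metric.infDist p W) :
    Metric.infDist p {w ∈ W | dist O w ≤ R ∧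
        ¬ ∃ x ∈ W, ∃ s : ℝ, 0 < s ∧ s < 1 ∧ x = O + s • (w - O)} = Metric.infDist p W ∧
      ∀ w ∈ W, dist p w = Metric.infDist p W →
        w ∈ {w ∈ W | dist O w ≤ R ∧
          ¬ ∃ x ∈ W, ∃ s : ℝ, 0 < s ∧ s < 1 ∧ x = O + s • (w - O)} := by
  have key : ∀ w ∈ W, dist p w = Metric.infDist p W →
      w ∈ {w ∈ W | dist O w ≤ R ∧
        ¬ ∃ x ∈ W, ∃ s : ℝ, 0 < s ∧ s < 1 ∧ x = O + s • (w - O)} := by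
    intro w hw hdw
    have hrM : dist p w ≤ M / 2 := by rw [hdw]; exact hpM
    have hrm : m / 2 ≤ dist p w := by rw [hdw]; exact hpm
    refine ⟨hw, ?_, ?_⟩
    · have htri := dist_triangle O p w
      linarith
    · rintro ⟨x, hxW, s, hs0, hs1, hx⟩
      set v := p - O with hv
      set u := w - O with hu
      have hd : dist O w = ‖u‖ := by rw [dist_comm, dist_eq_norm]
      have hDd : D ≤ ‖u‖ := hd ▸ hDist w hw
      have hDsd : D ≤ s * ‖u‖ := by
        have h := hDist x hxW
        rw [dist_comm, dist_eq_norm, hx, add_sub_cancel_left, norm_smul,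
          Real.norm_eq_abs, abs_of_pos hs0] at h
        exact h
      have hrx : dist p w ≤ dist p x := by
        rw [hdw]; exact Metric.infDist_le_dist_of_mem hxW
      have hr1 : dist p w ^ 2 = ‖v‖ ^ 2 - 2 * inner ℝ v u + ‖u‖ ^ 2 := by
        rw [dist_eq_norm]
        have hpw : p - w = v - u := by rw [hv, hu]; abel
        rw [hpw, @norm_sub_sq_real]
      have hr2 : dist p x ^ 2 = ‖v‖ ^ 2 - 2 * (s * inner ℝ v u) + s ^ 2 * ‖u‖ ^ 2 := by
        rw [dist_eq_norm]
        have hpx : p - x = v - s • u := by rw [hx, hv, hu]; abel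
        rw [hpx, @norm_sub_sq_real, real_inner_smul_right, norm_smul,
          Real.norm_eq_abs, abs_of_pos hs0]
        ring
      have hcs : (inner ℝ v u : ℝ) ≤ ‖v‖ * ‖u‖ := real_inner_le_norm v u
      have ha : ‖v‖ ≤ L + ℓ := by
        rw [hv, ← dist_eq_norm, dist_comm]; exact hp
      have hx2 : dist p w ^ 2 ≤ dist p x ^ 2 := by
        have := dist_nonneg (x := p) (y := w)
        nlinarith
      have h1s : (0:ℝ) < 1 - s := by linarith
      have h5 : 0 ≤ 2 * (inner ℝ v u : ℝ) - 2 * (s * inner ℝ v u) - ‖u‖ ^ 2 + s ^ 2 * ‖u‖ ^ 2 := by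
        linarith [hx2, hr1, hr2]
      have h6 : ‖u‖ ^ 2 + s * ‖u‖ ^ 2 ≤ 2 * (inner ℝ v u : ℝ) := by
        by_contra hcon
        push_neg at hcon
        nlinarith [h5, hcon, h1s, mul_pos h1s h1s]
      have hddpos : (0:ℝ) < ‖u‖ := lt_of_lt_of_le hDpos hDd
      have hDlt : D < ‖u‖ := lt_of_le_of_lt hDsd (by nlinarith)
      have h8 : D ^ 2 < s * ‖u‖ ^ 2 := by
        calc D ^ 2 = D * D := sq D
          _ ≤ (s * ‖u‖) * D := mul_le_mul_of_nonneg_right hDsd hDpos.le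
          _ < (s * ‖u‖) * ‖u‖ := by
              exact mul_lt_mul_of_pos_left hDlt (mul_pos hs0 hddpos)
          _ = s * ‖u‖ ^ 2 := by ring
      have h9 : dist p w ^ 2 ≤ ‖v‖ ^ 2 - s * ‖u‖ ^ 2 := by linarith [hr1, h6]
      have hA : ‖v‖ ^ 2 ≤ (L + ℓ) ^ 2 := pow_le_pow_left₀ (norm_nonneg v) ha 2
      have hfin : m ^ 2 / 4 ≤ dist p w ^ 2 := by
        have := pow_le_pow_left₀ (by linarith : (0:ℝ) ≤ m / 2) hrm 2
        nlinarith [this]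
      linarith
  obtain ⟨w, hw, hdw⟩ := hWclosed.exists_infDist_eq_dist hWne p
  have hwV := key w hw hdw.symm
  constructor
  · apply le_antisymm
    · rw [hdw]
      exact Metric.infDist_le_dist_of_mem hwV
    · exact Metric.infDist_le_infDist_of_subset (fun y hy => hy.1) ⟨w, hwV⟩
  · exact key
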